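/- The invariant factors f₁ | f₂ | ⋯ | f_v of the Laplacian of an N-colored Adinkra on v vertices satisfy f_i · f_{v-i+1} = N² - N for all i. -/

import Mathlib

open Matrix

structure IsAdinkra {V : Type} [Fintype V] [DecidableEq V] (N : ℕ)
    (nbr : Fin N → V → V) (σ : V → V → ℤ) : Prop where
  invol : ∀ c u, nbr c (nbr c u) = u
  ne : ∀ c u, nbr c u ≠ u
  distinct : ∀ c c' u, c ≠ c' → nbr c u ≠ nbr c' u
  symm : ∀ u w, σ u w = σ w u
  sign_unit : ∀ u w, σ u w = 1 ∨ σ u w = -1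
  bipartite : ∃ p : V → ZMod 2, ∀ c u, p (nbr c u) ≠ p u
  connected : (SimpleGraph.fromRel fun u w => ∃ c, nbr c u = w).Connected
  fourCycle : ∀ c c', c ≠ c' → ∀ u, nbr c (nbr c' (nbr c (nbr c' u))) = u
  oddSign : ∀ c c', c ≠ c' → ∀ u,
    σ u (nbr c' u) * σ (nbr c' u) (nbr c (nbr c' u)) *
      σ (nbr c (nbr c' u)) (nbr c' (nbr c (nbr c' u))) *
      σ (nbr c' (nbr c (nbr c' u))) u = -1

/-- The signed adjacency matrix of an Adinkra. -/
def adinkraAdj {V : Type} [Fintype V] [DecidableEq V] {N : ℕ}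
    (nbr : Fin N → V → V) (σ : V → V → ℤ) : Matrix V V ℤ :=
  Matrix.of fun u w => if ∃ c, nbr c u = w then σ u w else 0

/-- The signed Laplacian `L(𝒜) = N·I - A_σ` of an Adinkra. -/
def adinkraLap {V : Type} [Fintype V] [DecidableEq V] {N : ℕ}
    (nbr : Fin N → V → V) (σ : V → V → ℤ) : Matrix V V ℤ :=
  (N : ℤ) • (1 : Matrix V V ℤ) - adinkraAdj nbr σ
section AdinkraLemmas
open Matrix
variable {V : Type} [Fintype V] [DecidableEq V] {N : ℕ}
variable {nbr : Fin N → V → V} {σ : V → V → ℤ}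

lemma IsAdinkra.nbr_injective (hA : IsAdinkra N nbr σ) (u : V) :
    Function.Injective (fun c => nbr c u) := by
  intro c c' h
  by_contra hne
  exact hA.distinct c c' u hne h

lemma IsAdinkra.nbr_comm (hA : IsAdinkra N nbr σ) {c c' : Fin N} (h : c ≠ c') (u : V) :
    nbr c (nbr c' u) = nbr c' (nbr c u) := by
  have h4 := hA.fourCycle c c' h u
  have := congrArg (nbr c) h4
  rw [hA.invol] at this
  have := congrArg (nbr c') this
  rw [hA.invol] at this
  exact this

lemma IsAdinkra.sq (hA : IsAdinkra N nbr σ) :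
    adinkraAdj nbr σ * adinkraAdj nbr σ = (N : ℤ) • (1 : Matrix V V ℤ) := by
  ext u w
  rw [Matrix.mul_apply]
  have hre : ∑ x, adinkraAdj nbr σ u x * adinkraAdj nbr σ x w
      = ∑ c : Fin N, σ u (nbr c u) * adinkraAdj nbr σ (nbr c u) w := by
    calc ∑ x, adinkraAdj nbr σ u x * adinkraAdj nbr σ x w
        = ∑ x ∈ Finset.univ.image (fun c => nbr c u),
            adinkraAdj nbr σ u x * adinkraAdj nbr σ x w := by
          symm
          apply Finset.sum_subset (Finset.subset_univ _)
          intro x _ hx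
          simp only [Finset.mem_image, Finset.mem_univ, true_and] at hx
          have h0 : adinkraAdj nbr σ u x = 0 := by
            simp only [adinkraAdj, Matrix.of_apply, ite_eq_right_iff]
            intro hex
            exact absurd hex (fun ⟨c, hc⟩ => hx ⟨c, hc⟩)
          rw [h0, zero_mul]
      _ = ∑ c : Fin N, adinkraAdj nbr σ u (nbr c u) * adinkraAdj nbr σ (nbr c u) w :=
          Finset.sum_image (fun c _ c' _ h => hA.nbr_injective u h)
      _ = ∑ c : Fin N, σ u (nbr c u) * adinkraAdj nbr σ (nbr c u) w := by
          apply Finset.sum_congr rfl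
          intro c _
          congr 1
          simp only [adinkraAdj, Matrix.of_apply,
            if_pos (⟨c, rfl⟩ : ∃ c', nbr c' u = nbr c u)]
  rw [hre]
  by_cases huw : u = w
  · subst huw
    have : ∀ c : Fin N, σ u (nbr c u) * adinkraAdj nbr σ (nbr c u) u = 1 := by
      intro c
      have hex : ∃ c', nbr c' (nbr c u) = u := ⟨c, hA.invol c u⟩
      simp only [adinkraAdj, Matrix.of_apply, if_pos hex]
      rw [← hA.symm u (nbr c u)]
      rcases hA.sign_unit u (nbr c u) with h | h <;> rw [h] <;> ring
    rw [Finset.sum_congr rfl (fun c _ => this c)]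
    simp [Matrix.one_apply]
  · have hrhs : ((N : ℤ) • (1 : Matrix V V ℤ)) u w = 0 := by
      simp [Matrix.one_apply_ne huw]
    rw [hrhs]
    have huniq : ∀ (x : V) (c c' : Fin N), nbr c x = nbr c' x → c = c' := by
      intro x c c' h
      by_contra hne
      exact hA.distinct c c' x hne h
    have hval : ∀ c c' : Fin N, nbr c' (nbr c u) = w →
        adinkraAdj nbr σ (nbr c u) w = σ (nbr c u) w := by
      intro c c' hcw
      simp only [adinkraAdj, Matrix.of_apply,
        if_pos (⟨c', hcw⟩ : ∃ c'', nbr c'' (nbr c u) = w)]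
    have hzero : ∀ c : Fin N, (¬∃ c', c' ≠ c ∧ nbr c' (nbr c u) = w) →
        adinkraAdj nbr σ (nbr c u) w = 0 := by
      intro c h
      simp only [adinkraAdj, Matrix.of_apply, ite_eq_right_iff]
      rintro ⟨c', hc'⟩
      exfalso
      rcases eq_or_ne c' c with rfl | hne
      · rw [hA.invol] at hc'; exact huw hc'
      · exact h ⟨c', hne, hc'⟩
    have hpair : ∀ c c' : Fin N, c' ≠ c → nbr c' (nbr c u) = w →
        σ u (nbr c u) * σ (nbr c u) w + σ u (nbr c' u) * σ (nbr c' u) w = 0 := by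
      intro c c' hne hcw
      have hw2 : nbr c (nbr c' u) = w := by
        rw [hA.nbr_comm (Ne.symm hne) u]; exact hcw
      have hodd := hA.oddSign c c' (Ne.symm hne) u
      rw [hw2] at hodd
      have hback : nbr c' w = nbr c u := by
        rw [← hw2, hA.nbr_comm (Ne.symm hne) u, hA.invol]
      rw [hback] at hodd
      rw [hA.symm w (nbr c u), hA.symm (nbr c u) u] at hodd
      -- hodd : σ u (nbr c' u) * σ (nbr c' u) w * σ (nbr c u) w * σ u (nbr c u) = -1
      rcases hA.sign_unit u (nbr c u) with h1 | h1 <;>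
        rcases hA.sign_unit (nbr c u) w with h2 | h2 <;>
          rcases hA.sign_unit u (nbr c' u) with h3 | h3 <;>
            rcases hA.sign_unit (nbr c' u) w with h4 | h4 <;>
              rw [h1, h2, h3, h4] at hodd ⊢ <;> omega
    refine Finset.sum_involution
      (fun c _ => if h : ∃ c', c' ≠ c ∧ nbr c' (nbr c u) = w then h.choose else c)
      ?_ ?_ (fun c hc => Finset.mem_univ _) ?_
    · intro c _
      by_cases h : ∃ c', c' ≠ c ∧ nbr c' (nbr c u) = w
      · rw [dif_pos h]
        obtain ⟨hne, hcw⟩ := h.choose_spec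
        have hw2 : nbr c (nbr h.choose u) = w := by
          rw [hA.nbr_comm (Ne.symm hne) u]; exact hcw
        rw [hval c h.choose hcw, hval h.choose c hw2]
        exact hpair c h.choose hne hcw
      · rw [dif_neg h, hzero c h]
        ring
    · intro c _ hFc
      by_cases h : ∃ c', c' ≠ c ∧ nbr c' (nbr c u) = w
      · rw [dif_pos h]; exact h.choose_spec.1
      · exfalso; apply hFc
        rw [hzero c h, mul_zero]
    · intro c _
      by_cases h : ∃ c', c' ≠ c ∧ nbr c' (nbr c u) = w
      · obtain ⟨hne, hcw⟩ := h.choose_spec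
        rw [dif_pos h]
        have hw2 : nbr c (nbr h.choose u) = w := by
          rw [hA.nbr_comm (Ne.symm hne) u]; exact hcw
        have h2 : ∃ c'', c'' ≠ h.choose ∧ nbr c'' (nbr h.choose u) = w :=
          ⟨c, Ne.symm hne, hw2⟩
        rw [dif_pos h2]
        obtain ⟨hne2, hcw2⟩ := h2.choose_spec
        exact huniq (nbr h.choose u) _ _ (hcw2.trans hw2.symm)
      · rw [dif_neg h, dif_neg h]

end AdinkraLemmas
section Machinery
open Matrix

variable {n : Type*} [Fintype n] [DecidableEq n] {R : Type*} [CommRing R]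

lemma cancel_inv_mul {Q : Matrix n n R} (hQ : IsUnit Q.det) (Y : Matrix n n R) :
    Q⁻¹ * (Q * Y) = Y := by
  rw [← Matrix.mul_assoc, Matrix.nonsing_inv_mul _ hQ, Matrix.one_mul]

lemma cancel_mul_inv {Q : Matrix n n R} (hQ : IsUnit Q.det) (Y : Matrix n n R) :
    Q * (Q⁻¹ * Y) = Y := by
  rw [← Matrix.mul_assoc, Matrix.mul_nonsing_inv _ hQ, Matrix.one_mul]

lemma det_inv_isUnit {Q : Matrix n n R} (hQ : IsUnit Q.det) : IsUnit (Q⁻¹).det :=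
  IsUnit.of_mul_eq_one Q.det (by rw [← Matrix.det_mul, Matrix.nonsing_inv_mul _ hQ, Matrix.det_one])

end Machinery

/-- Number of solutions of `a * y = 0` in `ZMod n`. -/
noncomputable def solCount (n : ℕ) (a : ℤ) : ℕ := Nat.card {y : ZMod n // (a : ZMod n) * y = 0}

/-- Number of solutions of `A x = 0` over `ZMod n`. -/
noncomputable def kerCount (n : ℕ) {v : ℕ} (A : Matrix (Fin v) (Fin v) ℤ) : ℕ :=
  Nat.card {x : Fin v → ZMod n // (A.map (Int.cast : ℤ → ZMod n)).mulVec x = 0}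

lemma solCount_le (n : ℕ) (hn : n ≠ 0) (a : ℤ) : solCount n a ≤ n := by
  haveI : NeZero n := ⟨hn⟩
  rw [solCount, Nat.card_eq_fintype_card]
  calc Fintype.card {y : ZMod n // (a : ZMod n) * y = 0}
      ≤ Fintype.card (ZMod n) := Fintype.card_subtype_le _
    _ = n := ZMod.card n

lemma solCount_pos (n : ℕ) (hn : n ≠ 0) (a : ℤ) : 0 < solCount n a := by
  haveI : NeZero n := ⟨hn⟩
  have : Nonempty {y : ZMod n // (a : ZMod n) * y = 0} := ⟨⟨0, mul_zero _⟩⟩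
  exact Nat.card_pos

lemma solCount_eq_of_dvd (n : ℕ) (hn : n ≠ 0) {a : ℤ} (h : (n : ℤ) ∣ a) :
    solCount n a = n := by
  haveI : NeZero n := ⟨hn⟩
  have ha : (a : ZMod n) = 0 := (ZMod.intCast_zmod_eq_zero_iff_dvd a n).mpr h
  rw [solCount]
  rw [Nat.card_congr (Equiv.subtypeUnivEquiv (fun y => by rw [ha, zero_mul]))]
  simp [Nat.card_eq_fintype_card, ZMod.card]

lemma dvd_of_solCount_eq (n : ℕ) (hn : n ≠ 0) {a : ℤ} (h : solCount n a = n) :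
    (n : ℤ) ∣ a := by
  haveI : NeZero n := ⟨hn⟩
  by_contra hnd
  have ha : (a : ZMod n) ≠ 0 := fun h0 => hnd ((ZMod.intCast_zmod_eq_zero_iff_dvd a n).mp h0)
  have hlt : Fintype.card {y : ZMod n // (a : ZMod n) * y = 0} < Fintype.card (ZMod n) := by
    apply Fintype.card_subtype_lt (x := 1)
    rw [mul_one]
    exact ha
  rw [solCount, Nat.card_eq_fintype_card] at h
  rw [ZMod.card] at hlt
  omega

lemma kerCount_diagonal (n : ℕ) (hn : n ≠ 0) {v : ℕ} (d : Fin v → ℤ) :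
    kerCount n (Matrix.diagonal d) = ∏ j, solCount n (d j) := by
  haveI : NeZero n := ⟨hn⟩
  rw [kerCount]
  have hmap : (Matrix.diagonal d).map (Int.cast : ℤ → ZMod n)
      = Matrix.diagonal (fun j => ((d j : ZMod n))) := Matrix.diagonal_map Int.cast_zero
  rw [hmap]
  have e : {x : Fin v → ZMod n //
        (Matrix.diagonal fun j => ((d j : ZMod n))).mulVec x = 0}
      ≃ ∀ j, {y : ZMod n // (d j : ZMod n) * y = 0} := by
    refine (Equiv.subtypeEquivRight ?_).trans Equiv.subtypePiEquivPi
    intro x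
    constructor
    · intro hx j
      have := congrFun hx j
      rwa [Matrix.mulVec_diagonal] at this
    · intro hx
      funext j
      rw [Matrix.mulVec_diagonal, Pi.zero_apply]
      exact hx j
  rw [Nat.card_congr e, Nat.card_pi]
  simp only [solCount]

lemma kerCount_equiv (n : ℕ) {v : ℕ} {Q1 Q2 A : Matrix (Fin v) (Fin v) ℤ}
    (h1 : IsUnit Q1.det) (h2 : IsUnit Q2.det) :
    kerCount n (Q1 * A * Q2) = kerCount n A := by
  set φ := Int.castRingHom (ZMod n) with hφ
  have hc : (Int.cast : ℤ → ZMod n) = ⇑φ := rfl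
  have hmap : (Q1 * A * Q2).map (Int.cast : ℤ → ZMod n)
      = Q1.map (Int.cast : ℤ → ZMod n) * A.map (Int.cast : ℤ → ZMod n)
        * Q2.map (Int.cast : ℤ → ZMod n) := by
    rw [hc, Matrix.map_mul, Matrix.map_mul]
  set Q1' := Q1.map (Int.cast : ℤ → ZMod n)
  set Q2' := Q2.map (Int.cast : ℤ → ZMod n)
  set A' := A.map (Int.cast : ℤ → ZMod n)
  have hd1 : IsUnit Q1'.det := by
    have h := RingHom.map_det φ Q1
    rw [RingHom.mapMatrix_apply] at h
    have he : Q1.map ⇑φ = Q1' := rfl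
    rw [he] at h
    rw [← h]
    exact h1.map φ
  have hd2 : IsUnit Q2'.det := by
    have h := RingHom.map_det φ Q2
    rw [RingHom.mapMatrix_apply] at h
    have he : Q2.map ⇑φ = Q2' := rfl
    rw [he] at h
    rw [← h]
    exact h2.map φ
  have hQ1inj : ∀ z : Fin v → ZMod n, Q1'.mulVec z = 0 → z = 0 := by
    intro z hz
    have : (Q1'⁻¹ * Q1').mulVec z = Q1'⁻¹.mulVec (Q1'.mulVec z) :=
      (Matrix.mulVec_mulVec z Q1'⁻¹ Q1').symm
    rw [Matrix.nonsing_inv_mul _ hd1, Matrix.one_mulVec, hz, Matrix.mulVec_zero] at this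
    exact this
  rw [kerCount, kerCount, hmap]
  apply Nat.card_congr
  refine ⟨fun x => ⟨Q2'.mulVec x.1, ?_⟩, fun y => ⟨Q2'⁻¹.mulVec y.1, ?_⟩, ?_, ?_⟩
  · -- A' (Q2' x) = 0
    apply hQ1inj
    rw [Matrix.mulVec_mulVec, Matrix.mulVec_mulVec]
    exact x.2
  · -- (Q1' A' Q2') (Q2'⁻¹ y) = 0
    rw [Matrix.mulVec_mulVec, Matrix.mul_assoc, Matrix.mul_nonsing_inv _ hd2,
      Matrix.mul_one, ← Matrix.mulVec_mulVec, y.2, Matrix.mulVec_zero]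
  · intro x
    apply Subtype.ext
    show Q2'⁻¹.mulVec (Q2'.mulVec x.1) = x.1
    rw [Matrix.mulVec_mulVec, Matrix.nonsing_inv_mul _ hd2, Matrix.one_mulVec]
  · intro y
    apply Subtype.ext
    show Q2'.mulVec (Q2'⁻¹.mulVec y.1) = y.1
    rw [Matrix.mulVec_mulVec, Matrix.mul_nonsing_inv _ hd2, Matrix.one_mulVec]

lemma prod_term_eq_of_prod_eq_pow {α : Type*} [DecidableEq α] {s : Finset α} {t : α → ℕ} {n : ℕ}
    (hn : n ≠ 0) (hle : ∀ a ∈ s, t a ≤ n) (heq : ∏ a ∈ s, t a = n ^ s.card)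
    {a : α} (ha : a ∈ s) : t a = n := by
  by_contra hne
  have hlt : t a < n := lt_of_le_of_ne (hle a ha) hne
  have hrest : ∏ b ∈ s.erase a, t b ≤ n ^ (s.erase a).card :=
    Finset.prod_le_pow_card _ _ _ (fun b hb => hle b (Finset.mem_of_mem_erase hb))
  have hsplit : t a * ∏ b ∈ s.erase a, t b = n ^ s.card := by
    rw [Finset.mul_prod_erase s t ha]; exact heq
  have hcard : (s.erase a).card + 1 = s.card := Finset.card_erase_add_one ha
  have hnp : 0 < n ^ (s.erase a).card := Nat.pow_pos (Nat.pos_of_ne_zero hn)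
  have : t a * ∏ b ∈ s.erase a, t b < n * n ^ (s.erase a).card := by
    calc t a * ∏ b ∈ s.erase a, t b ≤ t a * n ^ (s.erase a).card :=
          Nat.mul_le_mul_left _ hrest
      _ < n * n ^ (s.erase a).card := (Nat.mul_lt_mul_right hnp).mpr hlt
  rw [hsplit, ← pow_succ' n (s.erase a).card, hcard] at this
  omega

/-- Key divisibility step: if `f, h` are positive divisibility chains whose diagonal
matrices have the same kernel counts mod every `n`, and they agree below `i`, then
`f i ∣ h i`. -/
lemma chain_dvd_step {v : ℕ} {f h : Fin v → ℤ}
    (hfpos : ∀ j, 0 < f j) (hhpos : ∀ j, 0 < h j)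
    (hfchain : ∀ i j : Fin v, i ≤ j → f i ∣ f j)
    (hcount : ∀ n : ℕ, n ≠ 0 → ∏ j, solCount n (f j) = ∏ j, solCount n (h j))
    (i : Fin v) (hbelow : ∀ j, j < i → f j = h j) : f i ∣ h i := by
  set n := (f i).toNat with hndef
  have hni : (n : ℤ) = f i := Int.toNat_of_nonneg (le_of_lt (hfpos i))
  have hn : n ≠ 0 := by
    intro h0
    rw [h0] at hni
    exact absurd hni.symm (ne_of_gt (hfpos i))
  classical
  set s := Finset.univ.filter (fun j : Fin v => j < i) with hs
  set sc := Finset.univ.filter (fun j : Fin v => ¬ j < i) with hsc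
  have hsplitf : ∏ j, solCount n (f j)
      = (∏ j ∈ s, solCount n (f j)) * n ^ sc.card := by
    rw [← Finset.prod_filter_mul_prod_filter_not Finset.univ (fun j => j < i)]
    congr 1
    rw [Finset.prod_congr rfl (fun j hj => ?_), Finset.prod_const]
    have hij : i ≤ j := not_lt.mp (Finset.mem_filter.mp hj).2
    exact solCount_eq_of_dvd n hn (hni ▸ hfchain i j hij)
  have hsplith : ∏ j, solCount n (h j)
      = (∏ j ∈ s, solCount n (f j)) * ∏ j ∈ sc, solCount n (h j) := by
    rw [← Finset.prod_filter_mul_prod_filter_not Finset.univ (fun j => j < i)]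
    congr 1
    exact Finset.prod_congr rfl (fun j hj => by
      rw [hbelow j (Finset.mem_filter.mp hj).2])
  have hP : 0 < ∏ j ∈ s, solCount n (f j) :=
    Finset.prod_pos (fun j _ => solCount_pos n hn _)
  have hkey : ∏ j ∈ sc, solCount n (h j) = n ^ sc.card := by
    have := (hcount n hn).symm.trans hsplitf
    rw [hsplith] at this
    exact Nat.eq_of_mul_eq_mul_left hP this
  have hii : i ∈ sc := Finset.mem_filter.mpr ⟨Finset.mem_univ _, lt_irrefl i⟩
  have hci : solCount n (h i) = n :=
    prod_term_eq_of_prod_eq_pow hn (fun j _ => solCount_le n hn _) hkey hii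
  have := dvd_of_solCount_eq n hn hci
  rwa [hni] at this
section Conj
open Matrix
variable {V : Type} [Fintype V] [DecidableEq V] {N : ℕ}
variable {nbr : Fin N → V → V} {σ : V → V → ℤ}

lemma IsAdinkra.conj (hA : IsAdinkra N nbr σ) :
    ∃ P : Matrix V V ℤ, P * P = 1 ∧
      P * adinkraLap nbr σ * P = (N : ℤ) • (1 : Matrix V V ℤ) + adinkraAdj nbr σ := by
  obtain ⟨p, hp⟩ := hA.bipartite
  set ε : V → ℤ := fun u => if p u = 0 then 1 else -1 with hε
  have hε2 : ∀ u, ε u * ε u = 1 := by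
    intro u
    by_cases h : p u = 0 <;> simp [hε, h]
  have hεm : ∀ a b : ZMod 2, a ≠ b →
      ((if a = 0 then (1:ℤ) else -1) * (if b = 0 then (1:ℤ) else -1)) = -1 := by decide
  refine ⟨Matrix.diagonal ε, ?_, ?_⟩
  · rw [Matrix.diagonal_mul_diagonal, ← Matrix.diagonal_one]
    exact congrArg Matrix.diagonal (funext fun u => hε2 u)
  · ext u w
    rw [Matrix.mul_diagonal, Matrix.diagonal_mul]
    rw [Matrix.add_apply, Matrix.smul_apply]
    rcases eq_or_ne u w with rfl | huw
    · have hA0 : adinkraAdj nbr σ u u = 0 := by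
        simp only [adinkraAdj, Matrix.of_apply, ite_eq_right_iff]
        rintro ⟨c, hc⟩
        exact absurd hc (hA.ne c u)
      rw [adinkraLap, Matrix.sub_apply, Matrix.smul_apply, hA0]
      have : ε u * ((N:ℤ) • (1:Matrix V V ℤ) u u - 0) * ε u
          = ((N:ℤ) • (1:Matrix V V ℤ) u u) * (ε u * ε u) := by ring
      rw [this, hε2, mul_one, add_zero]
    · rw [adinkraLap, Matrix.sub_apply, Matrix.smul_apply, Matrix.one_apply_ne huw]
      by_cases hex : ∃ c, nbr c u = w
      · obtain ⟨c, hc⟩ := hex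
        have hpw : p u ≠ p w := by
          rw [← hc]
          exact (hp c u).symm
        have hm1 : ε u * ε w = -1 := hεm (p u) (p w) hpw
        have : ε u * ((N:ℤ) • (0:ℤ) - adinkraAdj nbr σ u w) * ε w
            = -(ε u * ε w) * adinkraAdj nbr σ u w + (N:ℤ) • (0:ℤ) * (ε u * ε w) := by
          ring
        rw [this, hm1]
        simp only [smul_zero, sub_zero, add_zero, mul_zero, zero_mul]
        ring
      · have hA0 : adinkraAdj nbr σ u w = 0 := by
          simp only [adinkraAdj, Matrix.of_apply, ite_eq_right_iff]
          intro hex'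
          exact absurd hex' hex
        rw [hA0]
        simp only [smul_zero, sub_zero, add_zero, mul_zero, zero_mul]
end Conj

/-- The invariant factors `f₁ ∣ f₂ ∣ ⋯ ∣ f_v` of the Laplacian of an `N`-colored
Adinkra on `v` vertices satisfy `f_i · f_{v-i+1} = N² - N` for all `i`. Here the
invariant factors are presented by a Smith normal form `U · L · W = diag f` with
`U, W` unimodular, `f` positive and forming a divisibility chain. -/
theorem adinkra_invariant_factors_reciprocity {v : ℕ}
    {N : ℕ} (hN : 2 ≤ N) (nbr : Fin N → Fin v → Fin v) (σ : Fin v → Fin v → ℤ)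
    (hA : IsAdinkra N nbr σ)
    (U W : Matrix (Fin v) (Fin v) ℤ) (hU : IsUnit U.det) (hW : IsUnit W.det)
    (f : Fin v → ℤ) (hpos : ∀ i, 0 < f i)
    (hchain : ∀ i j : Fin v, i ≤ j → f i ∣ f j)
    (hSNF : U * adinkraLap nbr σ * W = Matrix.diagonal f) :
    ∀ i : Fin v, f i * f i.rev = (N : ℤ) ^ 2 - N := by
  classical
  set A := adinkraAdj nbr σ with hAdef
  set L := adinkraLap nbr σ with hLdef
  set L' := (N : ℤ) • (1 : Matrix (Fin v) (Fin v) ℤ) + A with hL'def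
  set m : ℤ := (N : ℤ)^2 - N with hmdef
  have hm : 0 < m := by
    have h2 : (2:ℤ) ≤ (N:ℤ) := by exact_mod_cast hN
    rw [hmdef]; nlinarith
  have hsq := hA.sq
  rw [← hAdef] at hsq
  have hLL' : L * L' = m • (1 : Matrix (Fin v) (Fin v) ℤ) := by
    rw [hLdef, hL'def, adinkraLap, ← hAdef]
    rw [sub_mul, mul_add, mul_add]
    rw [smul_mul_assoc, Matrix.one_mul, smul_smul]
    rw [smul_mul_assoc, Matrix.one_mul]
    rw [mul_smul_comm, Matrix.mul_one]
    rw [hsq, hmdef, sub_smul, pow_two]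
    abel
  obtain ⟨P, hPP, hPLP⟩ := hA.conj
  rw [← hAdef, ← hLdef, ← hL'def] at hPLP
  have hPdet : IsUnit P.det :=
    IsUnit.of_mul_eq_one P.det (by rw [← Matrix.det_mul, hPP, Matrix.det_one])
  have hUinv : IsUnit (U⁻¹).det := det_inv_isUnit hU
  have hWinv : IsUnit (W⁻¹).det := det_inv_isUnit hW
  set M := W⁻¹ * (L' * U⁻¹) with hMdef
  have hDM : Matrix.diagonal f * M = m • (1 : Matrix (Fin v) (Fin v) ℤ) := by
    rw [← hSNF, hMdef]
    rw [Matrix.mul_assoc (U * L) W, cancel_mul_inv hW]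
    rw [Matrix.mul_assoc U L, ← Matrix.mul_assoc L L' U⁻¹, hLL']
    rw [smul_mul_assoc, Matrix.one_mul, mul_smul_comm, Matrix.mul_nonsing_inv _ hU]
  have hfM : ∀ i j, f i * M i j = if i = j then m else 0 := by
    intro i j
    have h2 : (Matrix.diagonal f * M) i j = (m • (1 : Matrix (Fin v) (Fin v) ℤ)) i j := by
      rw [hDM]
    rw [Matrix.diagonal_mul, Matrix.smul_apply, Matrix.one_apply] at h2
    rw [h2]
    split_ifs <;> simp
  set g : Fin v → ℤ := fun j => M j j with hgdef
  have hfg : ∀ j, f j * g j = m := by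
    intro j
    have := hfM j j
    rw [if_pos rfl] at this
    exact this
  have hMdiag : M = Matrix.diagonal g := by
    ext i j
    rcases eq_or_ne i j with rfl | hij
    · rw [Matrix.diagonal_apply_eq]
    · rw [Matrix.diagonal_apply_ne _ hij]
      have := hfM i j
      rw [if_neg hij] at this
      exact (mul_eq_zero.mp this).resolve_left (ne_of_gt (hpos i))
  have hQ : Matrix.diagonal g = (W⁻¹ * P * U⁻¹) * Matrix.diagonal f * (W⁻¹ * P * U⁻¹) := by
    rw [← hMdiag, ← hSNF, hMdef, ← hPLP]
    simp only [Matrix.mul_assoc]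
    rw [cancel_inv_mul hU, cancel_mul_inv hW]
  have hQdet : IsUnit ((W⁻¹ * P * U⁻¹).det) := by
    rw [Matrix.det_mul, Matrix.det_mul]
    exact (hWinv.mul hPdet).mul hUinv
  have hcount : ∀ n : ℕ, n ≠ 0 → ∏ j, solCount n (f j) = ∏ j, solCount n (g j) := by
    intro n hn
    rw [← kerCount_diagonal n hn, ← kerCount_diagonal n hn, hQ,
      kerCount_equiv n hQdet hQdet]
  set h : Fin v → ℤ := fun j => g j.rev with hhdef
  have hgpos : ∀ j, 0 < g j := by
    intro j
    nlinarith [hfg j, hpos j, hm]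
  have hganti : ∀ i j : Fin v, i ≤ j → g j ∣ g i := by
    intro i j hij
    obtain ⟨t, ht⟩ := hchain i j hij
    have heq : f i * g i = f i * (t * g j) := by
      rw [hfg i, ← hfg j, ht]
      ring
    have := mul_left_cancel₀ (ne_of_gt (hpos i)) heq
    exact ⟨t, by rw [this]; ring⟩
  have hhpos : ∀ j, 0 < h j := fun j => hgpos _
  have hhchain : ∀ i j : Fin v, i ≤ j → h i ∣ h j := by
    intro i j hij
    exact hganti j.rev i.rev (Fin.rev_le_rev.mpr hij)
  have hcount_h : ∀ n : ℕ, n ≠ 0 → ∏ j, solCount n (f j) = ∏ j, solCount n (h j) := by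
    intro n hn
    rw [hcount n hn]
    exact Fintype.prod_equiv (Fin.revPerm) _ _ (fun j => by simp [hhdef])
  have hfh : ∀ k : ℕ, ∀ i : Fin v, (i : ℕ) = k → f i = h i := by
    intro k
    induction k using Nat.strong_induction_on with
    | _ k IH =>
      intro i hik
      have hbelow : ∀ j, j < i → f j = h j := by
        intro j hj
        have hjk : (j : ℕ) < k := by rw [← hik]; exact hj
        exact IH (j : ℕ) hjk j rfl
      have h1 : f i ∣ h i := chain_dvd_step hpos hhpos hchain hcount_h i hbelow
      have h2 : h i ∣ f i := chain_dvd_step hhpos hpos hhchain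
        (fun n hn => (hcount_h n hn).symm) i (fun j hj => (hbelow j hj).symm)
      exact Int.dvd_antisymm (le_of_lt (hpos i)) (le_of_lt (hhpos i)) h1 h2
  intro i
  have hrev : f i.rev = g i := by
    have := hfh (i.rev : ℕ) i.rev rfl
    rw [this, hhdef]
    simp [Fin.rev_rev]
  rw [hrev]
  exact hfg i
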